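/- Combining: if u(x̂) - u(x) ≥ (1 - e^{-c̲ t}) P_x(τ_D > t) u(x̂) for all t > 0, and P_x(τ_D > t) ≥ e^{-λ t} φ(x)/‖φ‖_∞, then u(x̂) - u(x) ≥ u(x̂) φ(x)/(e ‖φ‖_∞) · c̲/(λ + c̲). -/

import Mathlib

/-- Combining the two lower bounds: if u(x̂)-u(x) ≥ (1-e^{-c̲t}) P_x(τ_D>t) u(x̂)
for all t > 0 and P_x(τ_D>t) ≥ e^{-λt} φ(x)/‖φ‖_∞, then
u(x̂)-u(x) ≥ u(x̂) φ(x)/(e‖φ‖_∞) · c̲/(λ+c̲). -/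
theorem stmt10 (c lam uhat phix Mphi Δ : ℝ) (p : ℝ → ℝ)
    (hc : 0 < c) (hlam : 0 < lam) (huhat : 0 ≤ uhat) (hphix : 0 ≤ phix)
    (hMphi : 0 < Mphi)
    (h1 : ∀ t : ℝ, 0 < t → (1 - Real.exp (-(c * t))) * p t * uhat ≤ Δ)
    (h2 : ∀ t : ℝ, 0 < t → Real.exp (-(lam * t)) * phix / Mphi ≤ p t) :
    uhat * phix / (Real.exp 1 * Mphi) * (c / (lam + c)) ≤ Δ := by
  have hlc : 0 < lam + c := by linarith
  set t₀ : ℝ := 1 / (lam + c) with ht₀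
  have ht : 0 < t₀ := by positivity
  have hE : (1 : ℝ) - Real.exp (-(c * t₀)) ≥ c * t₀ * Real.exp (-(c * t₀)) := by
    have h := Real.add_one_le_exp (c * t₀)
    have hx : 0 < Real.exp (-(c * t₀)) := Real.exp_pos _
    have : Real.exp (-(c * t₀)) * Real.exp (c * t₀) = 1 := by
      rw [← Real.exp_add]; simp
    nlinarith
  have hEpos : (0 : ℝ) < 1 - Real.exp (-(c * t₀)) := by
    have : Real.exp (-(c * t₀)) < 1 := by
      apply Real.exp_lt_one_iff.mpr; nlinarith
    linarith
  have hp := h2 t₀ ht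
  have hppos : 0 ≤ p t₀ := le_trans (by positivity) hp
  have step1 : (1 - Real.exp (-(c * t₀))) * (Real.exp (-(lam * t₀)) * phix / Mphi) * uhat ≤ Δ := by
    refine le_trans ?_ (h1 t₀ ht)
    apply mul_le_mul_of_nonneg_right _ huhat
    exact mul_le_mul_of_nonneg_left hp hEpos.le
  refine le_trans ?_ step1
  have hE2 : c * t₀ * Real.exp (-(c * t₀)) * (Real.exp (-(lam * t₀)) * phix / Mphi) * uhat
      ≤ (1 - Real.exp (-(c * t₀))) * (Real.exp (-(lam * t₀)) * phix / Mphi) * uhat := by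
    apply mul_le_mul_of_nonneg_right _ huhat
    apply mul_le_mul_of_nonneg_right hE
    positivity
  refine le_trans (le_of_eq ?_) hE2
  have hexp : Real.exp (-(c * t₀)) * Real.exp (-(lam * t₀)) = Real.exp (-1) := by
    rw [← Real.exp_add]
    congr 1
    field_simp [ht₀]
    have : t₀ * (lam + c) = 1 := by rw [ht₀]; exact one_div_mul_cancel hlc.ne'
    linarith
  have hct : c * t₀ = c / (lam + c) := by rw [ht₀]; ring
  have hinv : Real.exp (-1) = 1 / Real.exp 1 := by
    rw [Real.exp_neg]; exact inv_eq_one_div _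
  calc uhat * phix / (Real.exp 1 * Mphi) * (c / (lam + c))
      = c * t₀ * (Real.exp (-(c * t₀)) * Real.exp (-(lam * t₀))) * phix / Mphi * uhat := by
        rw [hexp, hct, hinv]; field_simp
    _ = c * t₀ * Real.exp (-(c * t₀)) * (Real.exp (-(lam * t₀)) * phix / Mphi) * uhat := by ring
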